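/- Let k be a field and ≺ a local monomial order on ℕ^n such that |α| < |α'| implies α' ≺ α. Let I be an ideal of k[[x]], let m = (x_1,…,x_n) be the maximal ideal of k[[x]], and let E = Exp_≺(I). Then for every r ∈ ℕ, the k-vector space k[[x]]/(I + m^{r+1}) is finite dimensional and dim_k k[[x]]/(I + m^{r+1}) = card{α ∈ ℕ^n : α ∉ E and |α| ≤ r}; that is, the Hilbert–Samuel function of I equals the Hilbert–Samuel function of the monomial set E. -/

import Mathlib

open MvPowerSeries

noncomputable section

/-- A monomial order: a linear (strict total) order on an additive monoid of exponents,
compatible with addition. -/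
structure IsMonomialOrder {M : Type*} [AddCommMonoid M] (lt : M → M → Prop) : Prop where
  total : ∀ a b, lt a b ∨ a = b ∨ lt b a
  irrefl : ∀ a, ¬ lt a a
  trans : ∀ a b c, lt a b → lt b c → lt a c
  add_right : ∀ a b c, lt a b → lt (a + c) (b + c)

/-- A local monomial order: a monomial order for which `α ≼ 0` for every `α`. -/
structure IsLocalMonomialOrder {M : Type*} [AddCommMonoid M] (lt : M → M → Prop)
    extends IsMonomialOrder lt : Prop where
  le_zero : ∀ a, a = 0 ∨ lt a 0

/-- A monomial well order: a monomial order for which `0` is the least element. -/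
structure IsWellMonomialOrder {M : Type*} [AddCommMonoid M] (lt : M → M → Prop)
    extends IsMonomialOrder lt : Prop where
  zero_le : ∀ a, a = 0 ∨ lt 0 a

/-- The Newton diagram of a multivariate power series. -/
def ND {n : ℕ} {k : Type*} [Semiring k] (f : MvPowerSeries (Fin n) k) : Set (Fin n →₀ ℕ) :=
  {α | MvPowerSeries.coeff (R := k) α f ≠ 0}

/-- `e` is the `lt`-greatest element of the Newton diagram of `f`, i.e. `e = exp(f)`. -/
def IsExp {n : ℕ} {k : Type*} [Semiring k] (lt : (Fin n →₀ ℕ) → (Fin n →₀ ℕ) → Prop)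
    (f : MvPowerSeries (Fin n) k) (e : Fin n →₀ ℕ) : Prop :=
  e ∈ ND f ∧ ∀ β ∈ ND f, β ≠ e → lt β e

/-- `e + ℕ^n`. -/
def upSet {n : ℕ} (e : Fin n →₀ ℕ) : Set (Fin n →₀ ℕ) := {α | ∃ γ, α = e + γ}

/-- The set of leading exponents of the nonzero elements of an ideal of power series. -/
def ExpSet {n : ℕ} {k : Type*} [Semiring k] (lt : (Fin n →₀ ℕ) → (Fin n →₀ ℕ) → Prop)
    (J : Ideal (MvPowerSeries (Fin n) k)) : Set (Fin n →₀ ℕ) :=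
  {e | ∃ f ∈ J, IsExp lt f e}

/-- The region `Δ_j` of the partition of `ℕ^n` associated with `e_1, …, e_r`. -/
def Delta {n r : ℕ} (e : Fin r → (Fin n →₀ ℕ)) (j : Fin r) : Set (Fin n →₀ ℕ) :=
  upSet (e j) \ ⋃ (i : Fin r) (_ : i < j), upSet (e i)

/-- The region `Δ̄` of the partition of `ℕ^n` associated with `e_1, …, e_r`. -/
def DeltaBar {n r : ℕ} (e : Fin r → (Fin n →₀ ℕ)) : Set (Fin n →₀ ℕ) :=
  (⋃ (i : Fin r), upSet (e i))ᶜ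

/-- Condition (ii) of the division theorem: each quotient `q_j` is `0` or satisfies
`ND(q_j) + e_j ⊆ Δ_j`. -/
def QuotCond {n r : ℕ} {k : Type*} [Semiring k] (e : Fin r → (Fin n →₀ ℕ))
    (q : Fin r → MvPowerSeries (Fin n) k) : Prop :=
  ∀ j, q j = 0 ∨ ∀ α ∈ ND (q j), α + e j ∈ Delta e j

/-- Condition (iii) of the division theorem: the remainder `R` is `0` or satisfies
`ND(R) ⊆ Δ̄`. -/
def RemCond {n r : ℕ} {k : Type*} [Semiring k] (e : Fin r → (Fin n →₀ ℕ))
    (R : MvPowerSeries (Fin n) k) : Prop :=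
  R = 0 ∨ ND R ⊆ DeltaBar e


/-- Total degree of an exponent. -/
def dsum {n : ℕ} (α : Fin n →₀ ℕ) : ℕ := α.sum fun _ c => c

lemma dsum_add {n : ℕ} (α β : Fin n →₀ ℕ) : dsum (α + β) = dsum α + dsum β := by
  unfold dsum
  exact Finsupp.sum_add_index' (fun _ => rfl) (fun _ _ _ => rfl)

lemma apply_le_dsum {n : ℕ} (α : Fin n →₀ ℕ) (i : Fin n) : α i ≤ dsum α := by
  by_cases h : α i = 0
  · simp [h]
  · exact Finset.single_le_sum (fun j _ => Nat.zero_le _) (Finsupp.mem_support_iff.2 h)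

lemma dsum_single {n : ℕ} (i : Fin n) : dsum (Finsupp.single i 1) = 1 := by
  unfold dsum
  rw [Finsupp.sum_single_index rfl]

/-- The ideal of power series whose coefficients vanish below degree `s`. -/
def lowIdeal (n : ℕ) (k : Type) [Field k] (s : ℕ) : Ideal (MvPowerSeries (Fin n) k) where
  carrier := {f | ∀ α : Fin n →₀ ℕ, dsum α < s → MvPowerSeries.coeff (R := k) α f = 0}
  add_mem' := by
    intro a b ha hb α h
    rw [map_add, ha α h, hb α h, add_zero]
  zero_mem' := by intro α h; simp
  smul_mem' := by
    intro c f hf α h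
    classical
    rw [smul_eq_mul, MvPowerSeries.coeff_mul]
    refine Finset.sum_eq_zero fun p hp => ?_
    rw [Finset.HasAntidiagonal.mem_antidiagonal] at hp
    have h2 : dsum p.2 < s := by
      have := dsum_add p.1 p.2
      rw [hp] at this
      omega
    rw [hf p.2 h2, mul_zero]

lemma mem_lowIdeal_iff {n : ℕ} {k : Type} [Field k] {s : ℕ} {f : MvPowerSeries (Fin n) k} :
    f ∈ lowIdeal n k s ↔ ∀ α : Fin n →₀ ℕ, dsum α < s → MvPowerSeries.coeff (R := k) α f = 0 :=
  Iff.rfl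

lemma spanX_pow_le_lowIdeal {n : ℕ} (k : Type) [Field k] (s : ℕ) :
    (Ideal.span (Set.range fun i => (MvPowerSeries.X i : MvPowerSeries (Fin n) k))) ^ s ≤
      lowIdeal n k s := by
  induction s with
  | zero =>
    intro f _ α hα
    omega
  | succ s ih =>
    rw [pow_succ]
    have h1 : Ideal.span (Set.range fun i => (MvPowerSeries.X i : MvPowerSeries (Fin n) k)) ≤
        lowIdeal n k 1 := by
      rw [Ideal.span_le]
      rintro _ ⟨i, rfl⟩
      intro α hα
      classical
      rw [MvPowerSeries.coeff_X]
      rw [if_neg]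
      intro h
      rw [h, dsum_single] at hα
      omega
    refine le_trans (Ideal.mul_mono ih h1) (Ideal.mul_le.2 ?_)
    intro f hf g hg α hα
    classical
    rw [MvPowerSeries.coeff_mul]
    refine Finset.sum_eq_zero fun p hp => ?_
    rw [Finset.HasAntidiagonal.mem_antidiagonal] at hp
    have hd : dsum p.1 + dsum p.2 = dsum α := by rw [← dsum_add, hp]
    by_cases h2 : dsum p.2 < 1
    · rw [hg p.2 h2, mul_zero]
    · have : dsum p.1 < s := by omega
      rw [hf p.1 this, zero_mul]

lemma mem_spanX_pow {n : ℕ} {k : Type} [Field k] (s : ℕ) (f : MvPowerSeries (Fin n) k)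
    (hf : ∀ α : Fin n →₀ ℕ, dsum α < s → MvPowerSeries.coeff (R := k) α f = 0) :
    f ∈ (Ideal.span (Set.range fun i => (MvPowerSeries.X i : MvPowerSeries (Fin n) k))) ^ s := by
  classical
  induction s generalizing f with
  | zero => simp
  | succ s ih =>
    set g : Fin n → MvPowerSeries (Fin n) k := fun i α =>
      if ∀ j, j < i → α j = 0 then MvPowerSeries.coeff (R := k) (α + Finsupp.single i 1) f else 0
      with hg
    have key : f = ∑ i : Fin n, (MvPowerSeries.X i : MvPowerSeries (Fin n) k) * g i := by
      ext β
      rw [map_sum]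
      have hterm : ∀ i : Fin n,
          MvPowerSeries.coeff (R := k) β (MvPowerSeries.X i * g i) =
            if Finsupp.single i 1 ≤ β then
              MvPowerSeries.coeff (R := k) (β - Finsupp.single i 1) (g i) else 0 := by
        intro i
        rw [MvPowerSeries.X_def, MvPowerSeries.coeff_monomial_mul]
        simp only [one_mul]
      by_cases hβ : β = 0
      · subst hβ
        rw [hf 0 (by simp [dsum])]
        refine (Finset.sum_eq_zero fun i _ => ?_).symm
        rw [hterm i, if_neg]
        intro hle
        have := (Finsupp.single_le_iff.1 hle)
        simp at this
      · have hne : β.support.Nonempty := Finsupp.support_nonempty_iff.2 hβ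
        set i₀ := β.support.min' hne with hi₀
        have hi₀mem : i₀ ∈ β.support := Finset.min'_mem _ _
        have hβi₀ : β i₀ ≠ 0 := Finsupp.mem_support_iff.1 hi₀mem
        have hmin : ∀ j, j < i₀ → β j = 0 := by
          intro j hj
          by_contra hc
          exact absurd (Finset.min'_le _ _ (Finsupp.mem_support_iff.2 hc)) (not_le.2 hj)
        have hgcoeff : ∀ (i : Fin n) (α : Fin n →₀ ℕ), MvPowerSeries.coeff (R := k) α (g i) =
            if ∀ j, j < i → α j = 0 then MvPowerSeries.coeff (R := k) (α + Finsupp.single i 1) f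
            else 0 := fun i α => rfl
        rw [Finset.sum_eq_single i₀]
        · have hβi1 : (1 : ℕ) ≤ β i₀ := Nat.one_le_iff_ne_zero.2 hβi₀
          rw [hterm i₀, if_pos (Finsupp.single_le_iff.2 hβi1), hgcoeff]
          rw [if_pos, tsub_add_cancel_of_le (Finsupp.single_le_iff.2 hβi1)]
          intro j hj
          rw [Finsupp.tsub_apply, hmin j hj]
          simp
        · intro i _ hi
          rw [hterm i]
          by_cases hle : Finsupp.single i 1 ≤ β
          · rw [if_pos hle, hgcoeff]
            have hβi : 1 ≤ β i := Finsupp.single_le_iff.1 hle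
            have hii : i₀ < i := by
              rcases lt_or_eq_of_le
                (Finset.min'_le _ i (Finsupp.mem_support_iff.2 (Nat.one_le_iff_ne_zero.1 hβi)))
                with h | h
              · exact h
              · exact absurd h.symm hi
            rw [if_neg]
            intro hall
            have h5 := hall i₀ hii
            rw [Finsupp.tsub_apply, Finsupp.single_apply, if_neg (Fin.ne_of_lt hii).symm] at h5
            omega
          · rw [if_neg hle]
        · intro h
          exact absurd (Finset.mem_univ i₀) h
    rw [key]
    refine Submodule.sum_mem _ fun i _ => ?_
    rw [pow_succ']
    refine Ideal.mul_mem_mul (Ideal.subset_span ⟨i, rfl⟩) (ih (g i) ?_)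
    intro α hα
    rw [show MvPowerSeries.coeff (R := k) α (g i) =
      if ∀ j, j < i → α j = 0 then MvPowerSeries.coeff (R := k) (α + Finsupp.single i 1) f else 0
      from rfl]
    split
    · refine hf _ ?_
      rw [dsum_add, dsum_single]
      omega
    · rfl
lemma exists_lt_greatest {n : ℕ} {lt : (Fin n →₀ ℕ) → (Fin n →₀ ℕ) → Prop}
    (hlt : IsMonomialOrder lt) (T : Finset (Fin n →₀ ℕ)) (hT : T.Nonempty) :
    ∃ e ∈ T, ∀ β ∈ T, β ≠ e → lt β e := by
  classical
  induction T using Finset.induction_on with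
  | empty => exact absurd hT (by simp)
  | @insert a T _ ih =>
    rcases T.eq_empty_or_nonempty with hTe | hTne
    · subst hTe
      refine ⟨a, Finset.mem_insert_self a _, ?_⟩
      intro β hβ hne
      rcases Finset.mem_insert.1 hβ with h | h
      · exact absurd h hne
      · exact absurd h (Finset.notMem_empty β)
    · obtain ⟨e, heT, hmax⟩ := ih hTne
      rcases hlt.total a e with h | h | h
      · refine ⟨e, Finset.mem_insert_of_mem heT, ?_⟩
        intro β hβ hne
        rcases Finset.mem_insert.1 hβ with rfl | hb
        · exact h
        · exact hmax β hb hne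
      · subst h
        refine ⟨a, Finset.mem_insert_self a _, ?_⟩
        intro β hβ hne
        rcases Finset.mem_insert.1 hβ with rfl | hb
        · exact absurd rfl hne
        · exact hmax β hb hne
      · refine ⟨a, Finset.mem_insert_self a _, ?_⟩
        intro β hβ hne
        rcases Finset.mem_insert.1 hβ with rfl | hb
        · exact absurd rfl hne
        · by_cases hbe : β = e
          · subst hbe; exact h
          · exact hlt.trans β e a (hmax β hb hbe) h

lemma degLE_finite (n r : ℕ) : {α : Fin n →₀ ℕ | dsum α ≤ r}.Finite := by
  rw [Set.finite_coe_iff.symm]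
  refine Finite.of_injective
    (fun a : {α : Fin n →₀ ℕ | dsum α ≤ r} => fun i : Fin n =>
      (⟨a.1 i, lt_of_le_of_lt (le_trans (apply_le_dsum a.1 i) a.2) (Nat.lt_succ_self r)⟩ :
        Fin (r + 1))) ?_
  intro a b hab
  apply Subtype.ext
  ext i
  exact congrArg Fin.val (congrFun hab i)

set_option maxHeartbeats 2000000 in
/-- for a local monomial order `≺` refining (the inverse of) total degree,
an ideal `I ⊆ k[[x]]`, `m = (x_1, …, x_n)` and `E = Exp_≺(I)`, for every `r` the quotient
`k[[x]]/(I + m^{r+1})` is a finite-dimensional `k`-vector space of dimension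
`card {α ∉ E : |α| ≤ r}`: the Hilbert–Samuel function of `I` equals that of `E`. -/
theorem hilbertSamuel_eq_of_expSet {n : ℕ} (hn : 1 ≤ n) (k : Type) [Field k]
    (lt : (Fin n →₀ ℕ) → (Fin n →₀ ℕ) → Prop) (hlt : IsLocalMonomialOrder lt)
    (hdeg : ∀ α β : Fin n →₀ ℕ, (α.sum fun _ c => c) < (β.sum fun _ c => c) → lt β α)
    (I : Ideal (MvPowerSeries (Fin n) k)) (r : ℕ) :
    Module.Finite k
      (MvPowerSeries (Fin n) k ⧸
        (I + (Ideal.span (Set.range fun i =>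
          (MvPowerSeries.X i : MvPowerSeries (Fin n) k))) ^ (r + 1))) ∧
    Module.finrank k
      (MvPowerSeries (Fin n) k ⧸
        (I + (Ideal.span (Set.range fun i =>
          (MvPowerSeries.X i : MvPowerSeries (Fin n) k))) ^ (r + 1))) =
      Set.ncard {α : Fin n →₀ ℕ | α ∉ ExpSet lt I ∧ (α.sum fun _ c => c) ≤ r} := by
  classical
  set J : Ideal (MvPowerSeries (Fin n) k) :=
    Ideal.span (Set.range fun i => (MvPowerSeries.X i : MvPowerSeries (Fin n) k)) with hJdef
  set I' : Ideal (MvPowerSeries (Fin n) k) := I + J ^ (r + 1) with hI'def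
  set S : Set (Fin n →₀ ℕ) :=
    {α : Fin n →₀ ℕ | α ∉ ExpSet lt I ∧ (α.sum fun _ c => c) ≤ r} with hSdef
  have hIsup : I' = I ⊔ J ^ (r + 1) := by rw [hI'def, Submodule.add_eq_sup]
  have hJle : J ^ (r + 1) ≤ I' := by rw [hIsup]; exact le_sup_right
  have hIle : I ≤ I' := by rw [hIsup]; exact le_sup_left
  have hDfin := degLE_finite n r
  have hSsub : S ⊆ {α : Fin n →₀ ℕ | dsum α ≤ r} := fun α hα => hα.2
  have hSfin : S.Finite := hDfin.subset hSsub
  set mkl : MvPowerSeries (Fin n) k →ₗ[k] (MvPowerSeries (Fin n) k ⧸ I') :=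
    (Ideal.Quotient.mkₐ k I').toLinearMap with hmkl
  have hmk_eq : ∀ f : MvPowerSeries (Fin n) k, mkl f = Ideal.Quotient.mk I' f := fun f => rfl
  have hmk0 : ∀ f ∈ I', mkl f = 0 := by
    intro f hf
    rw [hmk_eq, Ideal.Quotient.eq_zero_iff_mem]
    exact hf
  have mk_trunc : ∀ f : MvPowerSeries (Fin n) k,
      mkl f = ∑ β ∈ hDfin.toFinset,
        MvPowerSeries.coeff (R := k) β f • mkl (MvPowerSeries.monomial (R := k) β 1) := by
    intro f
    have hmem : f - ∑ β ∈ hDfin.toFinset,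
        MvPowerSeries.coeff (R := k) β f • MvPowerSeries.monomial (R := k) β 1 ∈ J ^ (r + 1) := by
      rw [hJdef]
      apply mem_spanX_pow
      intro α hα
      rw [map_sub, map_sum]
      have hterm : ∀ β ∈ hDfin.toFinset,
          MvPowerSeries.coeff (R := k) α (MvPowerSeries.coeff (R := k) β f • MvPowerSeries.monomial (R := k) β 1) =
            if α = β then MvPowerSeries.coeff (R := k) β f else 0 := by
        intro β _
        rw [map_smul, MvPowerSeries.coeff_monomial, smul_eq_mul, mul_ite, mul_one, mul_zero]
      rw [Finset.sum_congr rfl hterm, Finset.sum_ite_eq,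
        if_pos (hDfin.mem_toFinset.2 (by change dsum α ≤ r; omega))]
      exact sub_self _
    have h0 : mkl (f - ∑ β ∈ hDfin.toFinset,
        MvPowerSeries.coeff (R := k) β f • MvPowerSeries.monomial (R := k) β 1) = 0 := hmk0 _ (hJle hmem)
    rw [map_sub, sub_eq_zero] at h0
    rw [h0, map_sum]
    exact Finset.sum_congr rfl fun β _ => map_smul mkl _ _
  set v : ↥S → (MvPowerSeries (Fin n) k ⧸ I') :=
    fun a => mkl (MvPowerSeries.monomial (R := k) (a : Fin n →₀ ℕ) 1) with hv
  have hspan_mon : ∀ β : Fin n →₀ ℕ, dsum β ≤ r →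
      mkl (MvPowerSeries.monomial (R := k) β 1) ∈ Submodule.span k (Set.range v) := by
    haveI hfinD : Finite {α : Fin n →₀ ℕ // dsum α ≤ r} := hDfin.to_subtype
    have hwf : WellFounded (fun a b : {α : Fin n →₀ ℕ // dsum α ≤ r} => lt a.1 b.1) := by
      haveI : IsTrans {α : Fin n →₀ ℕ // dsum α ≤ r} (fun a b => lt a.1 b.1) :=
        ⟨fun a b c hab hbc => hlt.trans _ _ _ hab hbc⟩
      haveI : IsIrrefl {α : Fin n →₀ ℕ // dsum α ≤ r} (fun a b => lt a.1 b.1) :=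
        ⟨fun a => hlt.irrefl a.1⟩
      exact Finite.wellFounded_of_trans_of_irrefl _
    have main : ∀ a : {α : Fin n →₀ ℕ // dsum α ≤ r},
        mkl (MvPowerSeries.monomial (R := k) a.1 1) ∈ Submodule.span k (Set.range v) := by
      intro a
      refine hwf.induction
        (C := fun a => mkl (MvPowerSeries.monomial (R := k) a.1 1) ∈ Submodule.span k (Set.range v))
        a ?_
      intro b IH
      by_cases hbE : b.1 ∈ ExpSet lt I
      · obtain ⟨f, hfI, hfe⟩ := hbE
        have hc0 : MvPowerSeries.coeff (R := k) b.1 f ≠ 0 := hfe.1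
        set c := MvPowerSeries.coeff (R := k) b.1 f with hc
        set g := f - c • MvPowerSeries.monomial (R := k) b.1 1 with hgdef
        have hmono_eq : (MvPowerSeries.monomial (R := k) b.1 1 : MvPowerSeries (Fin n) k) =
            c⁻¹ • f - c⁻¹ • g := by
          rw [hgdef, smul_sub, smul_smul, inv_mul_cancel₀ hc0, one_smul, sub_sub_cancel]
        have hmkf : mkl f = 0 := hmk0 f (hIle hfI)
        have heq : mkl (MvPowerSeries.monomial (R := k) b.1 1) = -(c⁻¹ • mkl g) := by
          rw [hmono_eq, map_sub, map_smul, map_smul, hmkf, smul_zero, zero_sub]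
        rw [heq]
        refine neg_mem (Submodule.smul_mem _ _ ?_)
        rw [mk_trunc g]
        refine Submodule.sum_mem _ fun β hβ => ?_
        by_cases hgb : MvPowerSeries.coeff (R := k) β g = 0
        · rw [hgb, zero_smul]; exact zero_mem _
        · refine Submodule.smul_mem _ _ ?_
          have hβr : dsum β ≤ r := hDfin.mem_toFinset.1 hβ
          have hβb : β ≠ b.1 := by
            intro h
            apply hgb
            rw [h, hgdef, map_sub, map_smul, MvPowerSeries.coeff_monomial_same, smul_eq_mul,
              mul_one, ← hc, sub_self]
          have hcf : MvPowerSeries.coeff (R := k) β f ≠ 0 := by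
            intro h
            apply hgb
            rw [hgdef, map_sub, map_smul, MvPowerSeries.coeff_monomial, if_neg hβb, smul_zero,
              h, sub_zero]
          exact IH ⟨β, hβr⟩ (hfe.2 β hcf hβb)
      · exact Submodule.subset_span ⟨⟨b.1, hbE, b.2⟩, rfl⟩
    intro β hβ
    exact main ⟨β, hβ⟩
  have hspan : Submodule.span k (Set.range v) = ⊤ := by
    rw [eq_top_iff]
    rintro x -
    obtain ⟨f, rfl⟩ := Ideal.Quotient.mk_surjective x
    rw [← hmk_eq, mk_trunc f]
    exact Submodule.sum_mem _ fun β hβ =>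
      Submodule.smul_mem _ _ (hspan_mon β (hDfin.mem_toFinset.1 hβ))
  haveI : Fintype ↥S := hSfin.fintype
  have hli : LinearIndependent k v := by
    rw [Fintype.linearIndependent_iff]
    intro gc hgc
    by_contra hne
    push_neg at hne
    obtain ⟨i₀, hi₀⟩ := hne
    set F : MvPowerSeries (Fin n) k :=
      ∑ i : ↥S, gc i • MvPowerSeries.monomial (R := k) (i : Fin n →₀ ℕ) 1 with hF
    have hFcoeff : ∀ (β : Fin n →₀ ℕ) (h : β ∈ S),
        MvPowerSeries.coeff (R := k) β F = gc ⟨β, h⟩ := by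
      intro β h
      rw [hF, map_sum, Finset.sum_eq_single (⟨β, h⟩ : ↥S)]
      · rw [map_smul, MvPowerSeries.coeff_monomial_same, smul_eq_mul, mul_one]
      · intro i _ hi
        rw [map_smul, MvPowerSeries.coeff_monomial, if_neg, smul_zero]
        intro hEq
        exact hi (Subtype.ext hEq.symm)
      · intro h'
        exact absurd (Finset.mem_univ _) h'
    have hFout : ∀ β : Fin n →₀ ℕ, β ∉ S → MvPowerSeries.coeff (R := k) β F = 0 := by
      intro β hβ
      rw [hF, map_sum]
      refine Finset.sum_eq_zero fun i _ => ?_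
      rw [map_smul, MvPowerSeries.coeff_monomial, if_neg, smul_zero]
      intro hEq
      exact hβ (hEq ▸ i.2)
    have hFI' : F ∈ I' := by
      have hmkF : mkl F = 0 := by
        rw [hF, map_sum]
        simp only [map_smul]
        exact hgc
      rw [hmk_eq, Ideal.Quotient.eq_zero_iff_mem] at hmkF
      exact hmkF
    rw [hIsup] at hFI'
    obtain ⟨f, hf, h', hh', hfh⟩ := Submodule.mem_sup.1 hFI'
    have hND : ND F ⊆ S := by
      intro β hβ
      by_contra h
      exact hβ (hFout β h)
    have hNDfin : (ND F).Finite := hSfin.subset hND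
    have hTAne : hNDfin.toFinset.Nonempty := by
      refine ⟨↑i₀, hNDfin.mem_toFinset.2 ?_⟩
      show MvPowerSeries.coeff (R := k) (↑i₀ : Fin n →₀ ℕ) F ≠ 0
      rw [hFcoeff ↑i₀ i₀.2]
      simpa using hi₀
    obtain ⟨e, heT, hemax⟩ := exists_lt_greatest hlt.toIsMonomialOrder _ hTAne
    have heND : e ∈ ND F := hNDfin.mem_toFinset.1 heT
    have heS : e ∈ S := hND heND
    have hh'low : ∀ α : Fin n →₀ ℕ, dsum α ≤ r → MvPowerSeries.coeff (R := k) α h' = 0 := by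
      intro α hα
      exact spanX_pow_le_lowIdeal k (r + 1) hh' α (by omega)
    have hcoefff : ∀ α : Fin n →₀ ℕ, MvPowerSeries.coeff (R := k) α f =
        MvPowerSeries.coeff (R := k) α F - MvPowerSeries.coeff (R := k) α h' := by
      intro α
      rw [← hfh, map_add]
      ring
    have hfe : MvPowerSeries.coeff (R := k) e f ≠ 0 := by
      rw [hcoefff, hh'low e heS.2, sub_zero]
      exact heND
    have hexp : IsExp lt f e := by
      refine ⟨hfe, ?_⟩
      intro β hβ hβe
      by_cases hβF : MvPowerSeries.coeff (R := k) β F = 0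
      · have hβh : MvPowerSeries.coeff (R := k) β h' ≠ 0 := by
          intro h0
          exact hβ (by rw [hcoefff, hβF, h0, sub_zero])
        have hdβ : r < dsum β := by
          by_contra hle
          exact hβh (hh'low β (by omega))
        exact hdeg e β (lt_of_le_of_lt heS.2 hdβ)
      · exact hemax β (hNDfin.mem_toFinset.2 hβF) hβe
    exact heS.1 ⟨f, hf, hexp⟩
  let b : Module.Basis ↥S k (MvPowerSeries (Fin n) k ⧸ I') := Module.Basis.mk hli (by rw [hspan])
  constructor
  · exact Module.Finite.of_basis b
  · rw [Module.finrank_eq_card_basis b, ← Nat.card_coe_set_eq, Nat.card_eq_fintype_card]
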